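/- Let λ_max ≥ λ₀ > λ > 0 and suppose θ*_λ ≠ θ*_{λ₀}. Then the strict inequality ‖θ*_λ − θ*_{λ₀}‖₂² < (m/2)·[ g((λ/λ₀)·θ*_{λ₀}) − g(θ*_{λ₀}) + (1 − λ/λ₀)·⟨∇g(θ*_{λ₀}), θ*_{λ₀}⟩ ] holds, where ∇g(θ) is the gradient of g, given componentwise by [∇g(θ)]_i = (1/m) log(θ_i/(1 − θ_i)). -/

import Mathlib

/-- The dual objective `g(θ) = (1/m) Σ_i [θ_i log θ_i + (1−θ_i) log(1−θ_i)]`. -/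
noncomputable def g (m : ℕ) (θ : Fin m → ℝ) : ℝ :=
  (1 / (m : ℝ)) * ∑ i, (θ i * Real.log (θ i) + (1 - θ i) * Real.log (1 - θ i))

/-- The gradient of `g`, componentwise `(1/m) log(θ_i/(1−θ_i))`. -/
noncomputable def gradg (m : ℕ) (θ : Fin m → ℝ) : Fin m → ℝ :=
  fun i => (1 / (m : ℝ)) * Real.log (θ i / (1 - θ i))
/-- The dual feasible set `F_λ`: componentwise in `(0,1)`, `|⟨θ, x̄^j⟩| ≤ mλ` for all
columns `x̄^j = X j`, and `⟨θ, b⟩ = 0`. -/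
def Feas (m p : ℕ) (X : Fin p → Fin m → ℝ) (b : Fin m → ℝ) (lam : ℝ) :
    Set (Fin m → ℝ) :=
  {θ | (∀ i, 0 < θ i ∧ θ i < 1) ∧ (∀ j, |∑ i, θ i * X j i| ≤ (m : ℝ) * lam) ∧
    ∑ i, θ i * b i = 0}
open scoped Classical in
/-- `m⁺ = #{i : b_i = 1}`. -/
noncomputable def mPlus (m : ℕ) (b : Fin m → ℝ) : ℕ :=
  (Finset.univ.filter (fun i => b i = 1)).card

open scoped Classical in
/-- `m⁻ = #{i : b_i = −1}`. -/
noncomputable def mMinus (m : ℕ) (b : Fin m → ℝ) : ℕ :=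
  (Finset.univ.filter (fun i => b i = -1)).card

open scoped Classical in
/-- `θ_max`, with `(θ_max)_i = m⁻/m` if `b_i = 1` and `m⁺/m` if `b_i = −1`. -/
noncomputable def thetaMax (m : ℕ) (b : Fin m → ℝ) : Fin m → ℝ :=
  fun i => if b i = 1 then (mMinus m b : ℝ) / m else (mPlus m b : ℝ) / m

/-- `λ_max = (1/m) max_j |⟨θ_max, x̄^j⟩|`. -/
noncomputable def lamMax (m p : ℕ) (X : Fin p → Fin m → ℝ) (b : Fin m → ℝ) : ℝ :=
  (1 / (m : ℝ)) * ⨆ j : Fin p, |∑ i, thetaMax m b i * X j i|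

open Real Set Filter Topology

/-- Binary entropy summand. -/
noncomputable def hent (x : ℝ) : ℝ := x * Real.log x + (1 - x) * Real.log (1 - x)

lemma hent_hasDerivAt {x : ℝ} (h0 : 0 < x) (h1 : x < 1) :
    HasDerivAt hent (Real.log x - Real.log (1 - x)) x := by
  have h1' : (0:ℝ) < 1 - x := by linarith
  have d1 : HasDerivAt (fun y : ℝ => y * Real.log y) (Real.log x + 1) x :=
    Real.hasDerivAt_mul_log h0.ne'
  have dinner : HasDerivAt (fun y : ℝ => 1 - y) (-1 : ℝ) x := by
    simpa using (hasDerivAt_id x).const_sub 1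
  have d2 : HasDerivAt (fun y : ℝ => (1 - y) * Real.log (1 - y))
      ((Real.log (1 - x) + 1) * (-1)) x := by
    have := (Real.hasDerivAt_mul_log h1'.ne').comp x dinner
    simpa [Function.comp_def] using this
  have := d1.add d2
  have heq : Real.log x + 1 + (Real.log (1 - x) + 1) * (-1)
      = Real.log x - Real.log (1 - x) := by ring
  rw [heq] at this
  exact this

/-- Auxiliary function `H(u) = log(u/(1-u)) - 4u`, the derivative gap. -/
noncomputable def Hfun (u : ℝ) : ℝ := Real.log u - Real.log (1 - u) - 4 * u

lemma Hfun_hasDerivAt {u : ℝ} (h0 : 0 < u) (h1 : u < 1) :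
    HasDerivAt Hfun (1/u + 1/(1-u) - 4) u := by
  have h1' : (0:ℝ) < 1 - u := by linarith
  have dinner : HasDerivAt (fun y : ℝ => 1 - y) (-1 : ℝ) u := by
    simpa using (hasDerivAt_id u).const_sub 1
  have d2 : HasDerivAt (fun y : ℝ => Real.log (1 - y)) (-1 / (1 - u)) u :=
    dinner.log h1'.ne'
  have d3 : HasDerivAt (fun y : ℝ => 4 * y) (4:ℝ) u := by
    simpa using (hasDerivAt_id u).const_mul (4:ℝ)
  have := ((Real.hasDerivAt_log h0.ne').sub d2).sub d3
  convert this using 1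
  · rfl
  · rfl
  · rfl
  ring

lemma Hfun_deriv_pos {u : ℝ} (h0 : 0 < u) (h1 : u < 1) (hne : u ≠ 1/2) :
    0 < 1/u + 1/(1-u) - 4 := by
  have h1' : (0:ℝ) < 1 - u := by linarith
  have key : 1/u + 1/(1-u) - 4 = (1 - 2*u)^2 / (u * (1-u)) := by
    field_simp
    ring
  rw [key]
  apply div_pos
  · have : 1 - 2*u ≠ 0 := by
      intro h; apply hne; linarith
    positivity
  · exact mul_pos h0 h1'

lemma Hfun_strictMonoOn {a b : ℝ} (ha : a ∈ Ioo (0:ℝ) 1) (hb : b ∈ Ioo (0:ℝ) 1)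
    (hab : a < b) : Hfun a < Hfun b := by
  have cont : ∀ s : Set ℝ, s ⊆ Ioo (0:ℝ) 1 → ContinuousOn Hfun s := by
    intro s hs x hx
    exact ((Hfun_hasDerivAt (hs hx).1 (hs hx).2).continuousAt).continuousWithinAt
  have m1 : StrictMonoOn Hfun (Ioc (0:ℝ) (1/2)) := by
    apply strictMonoOn_of_deriv_pos (convex_Ioc _ _)
    · exact cont _ (fun x hx => ⟨hx.1, lt_of_le_of_lt hx.2 (by norm_num)⟩)
    · intro x hx
      rw [interior_Ioc] at hx
      have hx1 : x < 1 := lt_trans hx.2 (by norm_num)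
      rw [(Hfun_hasDerivAt hx.1 hx1).deriv]
      exact Hfun_deriv_pos hx.1 hx1 (ne_of_lt hx.2)
  have m2 : StrictMonoOn Hfun (Ico (1/2:ℝ) 1) := by
    apply strictMonoOn_of_deriv_pos (convex_Ico _ _)
    · exact cont _ (fun x hx => ⟨lt_of_lt_of_le (by norm_num) hx.1, hx.2⟩)
    · intro x hx
      rw [interior_Ico] at hx
      have hx0 : 0 < x := lt_trans (by norm_num) hx.1
      rw [(Hfun_hasDerivAt hx0 hx.2).deriv]
      exact Hfun_deriv_pos hx0 hx.2 (ne_of_gt hx.1)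
  rcases le_or_gt b (1/2) with hb2 | hb2
  · exact m1 ⟨ha.1, le_trans hab.le hb2⟩ ⟨hb.1, hb2⟩ hab
  · rcases le_or_gt (1/2) a with ha2 | ha2
    · exact m2 ⟨ha2, ha.2⟩ ⟨le_trans ha2 hab.le, hb.2⟩ hab
    · calc Hfun a < Hfun (1/2) := m1 ⟨ha.1, ha2.le⟩ ⟨by norm_num, le_refl _⟩ ha2
        _ < Hfun b := m2 ⟨le_refl _, by norm_num⟩ ⟨hb2.le, hb.2⟩ hb2

/-- Strict Pinsker-type inequality for the binary-entropy Bregman divergence. -/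
lemma key_strict {t s : ℝ} (ht : t ∈ Ioo (0:ℝ) 1) (hs : s ∈ Ioo (0:ℝ) 1) (hne : s ≠ t) :
    2*(s-t)^2 < hent s - hent t - (Real.log t - Real.log (1 - t)) * (s - t) := by
  set c := Real.log t - Real.log (1 - t) with hc
  set F : ℝ → ℝ := fun u => hent u - c * u - 2*(u-t)^2 with hF
  have hFd : ∀ u ∈ Ioo (0:ℝ) 1, HasDerivAt F (Hfun u - Hfun t) u := by
    intro u hu
    have d1 := hent_hasDerivAt hu.1 hu.2
    have d2 : HasDerivAt (fun y : ℝ => c * y) c u := by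
      simpa using (hasDerivAt_id u).const_mul c
    have d3 : HasDerivAt (fun y : ℝ => 2*(y-t)^2) (2*(2*(u-t))) u := by
      have : HasDerivAt (fun y : ℝ => (y-t)^2) (2*(u-t)) u := by
        simpa [Pi.pow_def] using ((hasDerivAt_id u).sub_const t).pow 2
      simpa [mul_comm] using this.const_mul (2:ℝ)
    have := (d1.sub d2).sub d3
    convert this using 1
    · rfl
    · rfl
    · rfl
    simp only [Hfun, hc]
    ring
  have contF : ∀ sset : Set ℝ, sset ⊆ Ioo (0:ℝ) 1 → ContinuousOn F sset := by
    intro sset hsub x hx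
    exact ((hFd x (hsub hx)).continuousAt).continuousWithinAt
  have main : F t < F s := by
    rcases lt_or_gt_of_ne hne with hlt | hgt
    · have anti : StrictAntiOn F (Icc s t) := by
        apply strictAntiOn_of_deriv_neg (convex_Icc _ _)
        · exact contF _ (fun x hx => ⟨lt_of_lt_of_le hs.1 hx.1, lt_of_le_of_lt hx.2 ht.2⟩)
        · intro x hx
          rw [interior_Icc] at hx
          have hx01 : x ∈ Ioo (0:ℝ) 1 := ⟨lt_trans hs.1 hx.1, lt_trans hx.2 ht.2⟩
          rw [(hFd x hx01).deriv]
          have := Hfun_strictMonoOn hx01 ht hx.2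
          linarith
      exact anti ⟨le_refl _, hlt.le⟩ ⟨hlt.le, le_refl _⟩ hlt
    · have mono : StrictMonoOn F (Icc t s) := by
        apply strictMonoOn_of_deriv_pos (convex_Icc _ _)
        · exact contF _ (fun x hx => ⟨lt_of_lt_of_le ht.1 hx.1, lt_of_le_of_lt hx.2 hs.2⟩)
        · intro x hx
          rw [interior_Icc] at hx
          have hx01 : x ∈ Ioo (0:ℝ) 1 := ⟨lt_trans ht.1 hx.1, lt_trans hx.2 hs.2⟩
          rw [(hFd x hx01).deriv]
          have := Hfun_strictMonoOn ht hx01 hx.1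
          linarith
      exact mono ⟨le_refl _, hgt.le⟩ ⟨hgt.le, le_refl _⟩ hgt
  simp only [hF] at main
  nlinarith [main]

lemma key_le {t s : ℝ} (ht : t ∈ Ioo (0:ℝ) 1) (hs : s ∈ Ioo (0:ℝ) 1) :
    2*(s-t)^2 ≤ hent s - hent t - (Real.log t - Real.log (1 - t)) * (s - t) := by
  rcases eq_or_ne s t with h | h
  · subst h; simp
  · exact (key_strict ht hs h).le

lemma g_eq (m : ℕ) (θ : Fin m → ℝ) : g m θ = (1 / (m : ℝ)) * ∑ i, hent (θ i) := rfl

lemma gradg_eq (m : ℕ) (θ : Fin m → ℝ) (i : Fin m) (h0 : 0 < θ i) (h1 : θ i < 1) :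
    gradg m θ i = (1 / (m : ℝ)) * (Real.log (θ i) - Real.log (1 - θ i)) := by
  rw [gradg, Real.log_div h0.ne' (by linarith)]

/-- Variational inequality: if `θ₀` minimizes `g` along the segment `θ₀ + t d`,
`t ∈ [0, ε]`, then the directional derivative `⟨∇g(θ₀), d⟩` is nonnegative. -/
lemma varineq (m : ℕ) (θ₀ d : Fin m → ℝ) (hpos : ∀ i, 0 < θ₀ i ∧ θ₀ i < 1)
    (ε : ℝ) (hε : 0 < ε)
    (hmin : ∀ t ∈ Icc (0:ℝ) ε, g m θ₀ ≤ g m (fun i => θ₀ i + t * d i)) :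
    0 ≤ ∑ i, gradg m θ₀ i * d i := by
  set φ : ℝ → ℝ := fun t => g m (fun i => θ₀ i + t * d i) with hφ
  have hD : HasDerivAt φ (∑ i, gradg m θ₀ i * d i) 0 := by
    have hi : ∀ i : Fin m, HasDerivAt (fun t : ℝ => hent (θ₀ i + t * d i))
        ((Real.log (θ₀ i) - Real.log (1 - θ₀ i)) * d i) 0 := by
      intro i
      have inner : HasDerivAt (fun t : ℝ => θ₀ i + t * d i) (d i) 0 := by
        simpa using ((hasDerivAt_id (0:ℝ)).mul_const (d i)).const_add (θ₀ i)
      have hx : HasDerivAt hent (Real.log (θ₀ i) - Real.log (1 - θ₀ i))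
          ((fun t : ℝ => θ₀ i + t * d i) 0) := by
        simpa using hent_hasDerivAt (hpos i).1 (hpos i).2
      simpa [Function.comp_def] using hx.comp 0 inner
    have hsum := HasDerivAt.fun_sum (fun i (_ : i ∈ Finset.univ) => hi i)
    have := hsum.const_mul (1 / (m:ℝ))
    have heq : (1/(m:ℝ)) * ∑ i, (Real.log (θ₀ i) - Real.log (1 - θ₀ i)) * d i
        = ∑ i, gradg m θ₀ i * d i := by
      rw [Finset.mul_sum]
      refine Finset.sum_congr rfl (fun i _ => ?_)
      rw [gradg_eq m θ₀ i (hpos i).1 (hpos i).2]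
      ring
    rw [heq] at this
    simpa [hφ, g_eq] using this
  have hD' : HasDerivWithinAt φ (∑ i, gradg m θ₀ i * d i) (Ioi (0:ℝ)) 0 :=
    hD.hasDerivWithinAt
  rw [hasDerivWithinAt_iff_tendsto_slope,
    show Ioi (0:ℝ) \ {0} = Ioi 0 from Set.diff_singleton_eq_self (by simp)] at hD'
  refine ge_of_tendsto hD' ?_
  have h1 : ∀ᶠ t in 𝓝[Ioi (0:ℝ)] 0, t < ε :=
    eventually_nhdsWithin_of_eventually_nhds (gt_mem_nhds hε)
  filter_upwards [h1, eventually_mem_nhdsWithin] with t htε htm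
  have ht0 : 0 < t := htm
  have hnum : φ 0 ≤ φ t := by
    have := hmin t ⟨ht0.le, htε.le⟩
    have hφ0 : φ 0 = g m θ₀ := by
      simp only [hφ]
      congr 1
      funext i; ring
    rw [hφ0]
    exact this
  have : slope φ 0 t = (φ t - φ 0) / t := by
    rw [slope_def_field]; ring_nf
  rw [this]
  apply div_nonneg (by linarith) ht0.le

/-- Theorem 2(b): for `λ_max ≥ λ₀ > λ > 0` with `θ*_λ ≠ θ*_{λ₀}`, the strict inequality
`‖θ*_λ − θ*_{λ₀}‖₂² < (m/2)[g((λ/λ₀)θ*_{λ₀}) − g(θ*_{λ₀}) + (1 − λ/λ₀)⟨∇g(θ*_{λ₀}), θ*_{λ₀}⟩]`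
holds. -/
theorem slores_ball_bound_strict (m p : ℕ) (hm : 1 ≤ m) (hp : 1 ≤ p)
    (X : Fin p → Fin m → ℝ) (b : Fin m → ℝ) (hb : ∀ i, b i = 1 ∨ b i = -1)
    (hmp : 1 ≤ mPlus m b) (hmm : 1 ≤ mMinus m b) (hlmax : 0 < lamMax m p X b)
    (lam lam₀ : ℝ) (hlam : 0 < lam) (hll : lam < lam₀) (hle : lam₀ ≤ lamMax m p X b)
    (θs θ₀ : Fin m → ℝ)
    (hθs : θs ∈ Feas m p X b lam ∧ ∀ θ ∈ Feas m p X b lam, g m θs ≤ g m θ)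
    (hθ₀ : θ₀ ∈ Feas m p X b lam₀ ∧ ∀ θ ∈ Feas m p X b lam₀, g m θ₀ ≤ g m θ)
    (hne : θs ≠ θ₀) :
    ∑ i, (θs i - θ₀ i) ^ 2 < ((m : ℝ) / 2) *
      (g m (fun i => (lam / lam₀) * θ₀ i) - g m θ₀
        + (1 - lam / lam₀) * ∑ i, gradg m θ₀ i * θ₀ i) := by
  classical
  obtain ⟨⟨hposs, hconstrs, hbs⟩, hmins⟩ := hθs
  obtain ⟨⟨hpos0, hconstr0, hb0⟩, hmin0⟩ := hθ₀
  have hm0 : (0:ℝ) < m := by exact_mod_cast hm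
  have hlam₀ : 0 < lam₀ := hlam.trans hll
  set r : ℝ := lam / lam₀ with hrdef
  have hr0 : 0 < r := div_pos hlam hlam₀
  have hr1 : r < 1 := (div_lt_one hlam₀).2 hll
  have hrl : r * lam₀ = lam := div_mul_cancel₀ lam hlam₀.ne'
  -- the scaled point θ' = r θ₀ is feasible for λ
  have hθ'feas : (fun i => r * θ₀ i) ∈ Feas m p X b lam := by
    refine ⟨fun i => ⟨mul_pos hr0 (hpos0 i).1, ?_⟩, fun j => ?_, ?_⟩
    · show r * θ₀ i < 1
      have := (hpos0 i).2
      nlinarith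
    · have hsum : ∑ i, (r * θ₀ i) * X j i = r * ∑ i, θ₀ i * X j i := by
        rw [Finset.mul_sum]
        exact Finset.sum_congr rfl (fun i _ => by ring)
      rw [hsum, abs_mul, abs_of_pos hr0]
      calc r * |∑ i, θ₀ i * X j i| ≤ r * ((m:ℝ) * lam₀) := by
            exact mul_le_mul_of_nonneg_left (hconstr0 j) hr0.le
        _ = (m:ℝ) * lam := by rw [← hrl]; ring
    · have hsum : ∑ i, (r * θ₀ i) * b i = r * ∑ i, θ₀ i * b i := by
        rw [Finset.mul_sum]
        exact Finset.sum_congr rfl (fun i _ => by ring)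
      rw [hsum, hb0, mul_zero]
  have hB : g m θs ≤ g m (fun i => r * θ₀ i) := hmins _ hθ'feas
  -- the variational inequality in direction d = θs/r − θ₀
  set d : Fin m → ℝ := fun i => θs i / r - θ₀ i with hd
  haveI : Nonempty (Fin m) := Fin.pos_iff_nonempty.mp (by omega)
  have hune : (Finset.univ : Finset (Fin m)).Nonempty := Finset.univ_nonempty
  set ε : ℝ := min 1 (Finset.univ.inf' hune (fun i => (1 - θ₀ i)/(1 + |d i|))) with hεdef
  have hεpos : 0 < ε := by
    refine lt_min one_pos ?_
    rw [Finset.lt_inf'_iff]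
    intro i _
    have h1 : (0:ℝ) < 1 - θ₀ i := by linarith [(hpos0 i).2]
    positivity
  have hfeas : ∀ t ∈ Icc (0:ℝ) ε, (fun i => θ₀ i + t * d i) ∈ Feas m p X b lam₀ := by
    intro t ht
    have ht0 : 0 ≤ t := ht.1
    have ht1 : t ≤ 1 := le_trans ht.2 (min_le_left _ _)
    refine ⟨fun i => ⟨?_, ?_⟩, fun j => ?_, ?_⟩
    · -- positivity
      show 0 < θ₀ i + t * d i
      have hkey : θ₀ i + t * d i = (1-t) * θ₀ i + t * (θs i / r) := by
        simp only [hd]; ring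
      rw [hkey]
      rcases eq_or_lt_of_le ht0 with h | h
      · subst h; simpa using (hpos0 i).1
      · have h1 : 0 < t * (θs i / r) := mul_pos h (div_pos (hposs i).1 hr0)
        have h2 : 0 ≤ (1-t) * θ₀ i := mul_nonneg (by linarith) (hpos0 i).1.le
        linarith
    · -- upper bound < 1
      show θ₀ i + t * d i < 1
      have hti : t ≤ (1 - θ₀ i)/(1 + |d i|) :=
        le_trans (le_trans ht.2 (min_le_right _ _)) (Finset.inf'_le _ (Finset.mem_univ i))
      have habs : 0 ≤ |d i| := abs_nonneg _
      have h1 : t * d i ≤ t * |d i| :=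
        mul_le_mul_of_nonneg_left (le_abs_self _) ht0
      have h2 : t * |d i| ≤ (1 - θ₀ i)/(1 + |d i|) * |d i| :=
        mul_le_mul_of_nonneg_right hti habs
      have h3 : (1 - θ₀ i)/(1 + |d i|) * |d i| < 1 - θ₀ i := by
        rw [div_mul_eq_mul_div, div_lt_iff₀ (by positivity)]
        have := (hpos0 i).2
        nlinarith
      linarith
    · -- linear constraints
      have hsum : ∑ i, (θ₀ i + t * d i) * X j i
          = (1-t) * (∑ i, θ₀ i * X j i) + (t/r) * (∑ i, θs i * X j i) := by
        rw [Finset.mul_sum, Finset.mul_sum, ← Finset.sum_add_distrib]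
        refine Finset.sum_congr rfl (fun i _ => ?_)
        simp only [hd]
        field_simp
        ring
      rw [hsum]
      have htr : 0 ≤ t/r := div_nonneg ht0 hr0.le
      calc |(1-t) * (∑ i, θ₀ i * X j i) + (t/r) * (∑ i, θs i * X j i)|
          ≤ |(1-t) * (∑ i, θ₀ i * X j i)| + |(t/r) * (∑ i, θs i * X j i)| := abs_add_le _ _
        _ = (1-t) * |∑ i, θ₀ i * X j i| + (t/r) * |∑ i, θs i * X j i| := by
            rw [abs_mul, abs_mul, abs_of_nonneg (by linarith : (0:ℝ) ≤ 1 - t),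
              abs_of_nonneg htr]
        _ ≤ (1-t) * ((m:ℝ) * lam₀) + (t/r) * ((m:ℝ) * lam) := by
            gcongr
            · exact hconstr0 j
            · exact hconstrs j
        _ = (m:ℝ) * lam₀ := by
            rw [← hrl]
            field_simp
            ring
    · -- equality constraint
      have hsum : ∑ i, (θ₀ i + t * d i) * b i
          = (1-t) * (∑ i, θ₀ i * b i) + (t/r) * (∑ i, θs i * b i) := by
        rw [Finset.mul_sum, Finset.mul_sum, ← Finset.sum_add_distrib]
        refine Finset.sum_congr rfl (fun i _ => ?_)
        simp only [hd]
        field_simp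
        ring
      rw [hsum, hb0, hbs, mul_zero, mul_zero, add_zero]
  have hL : 0 ≤ ∑ i, gradg m θ₀ i * d i :=
    varineq m θ₀ d hpos0 ε hεpos (fun t ht => hmin0 _ (hfeas t ht))
  -- strict strong convexity
  set S : ℝ := ∑ i, (θs i - θ₀ i) ^ 2 with hS
  have hsc : 2 * S < ∑ i, (hent (θs i) - hent (θ₀ i)
      - (Real.log (θ₀ i) - Real.log (1 - θ₀ i)) * (θs i - θ₀ i)) := by
    rw [hS, Finset.mul_sum]
    apply Finset.sum_lt_sum
    · intro i _
      have := key_le (t := θ₀ i) (s := θs i) ⟨(hpos0 i).1, (hpos0 i).2⟩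
        ⟨(hposs i).1, (hposs i).2⟩
      linarith
    · obtain ⟨i, hi⟩ := Function.ne_iff.1 hne
      refine ⟨i, Finset.mem_univ i, ?_⟩
      have := key_strict (t := θ₀ i) (s := θs i) ⟨(hpos0 i).1, (hpos0 i).2⟩
        ⟨(hposs i).1, (hposs i).2⟩ hi
      linarith
  -- rewrite the strong convexity sum in terms of g and gradg
  set A : ℝ := ∑ i, gradg m θ₀ i * (θs i - θ₀ i) with hA
  set T : ℝ := ∑ i, gradg m θ₀ i * θ₀ i with hT
  set L : ℝ := ∑ i, gradg m θ₀ i * d i with hLdef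
  have hsum_eq : ∑ i, (hent (θs i) - hent (θ₀ i)
      - (Real.log (θ₀ i) - Real.log (1 - θ₀ i)) * (θs i - θ₀ i))
      = (m:ℝ) * g m θs - (m:ℝ) * g m θ₀ - (m:ℝ) * A := by
    have h1 : (m:ℝ) * g m θs = ∑ i, hent (θs i) := by
      rw [g_eq]; field_simp
    have h2 : (m:ℝ) * g m θ₀ = ∑ i, hent (θ₀ i) := by
      rw [g_eq]; field_simp
    have h3 : (m:ℝ) * A = ∑ i, (Real.log (θ₀ i) - Real.log (1 - θ₀ i)) * (θs i - θ₀ i) := by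
      rw [hA, Finset.mul_sum]
      refine Finset.sum_congr rfl (fun i _ => ?_)
      rw [gradg_eq m θ₀ i (hpos0 i).1 (hpos0 i).2]
      field_simp
    rw [h1, h2, h3, ← Finset.sum_sub_distrib, ← Finset.sum_sub_distrib]
  -- decompose A
  have hAdec : A = r * L + (r - 1) * T := by
    rw [hA, hLdef, hT, Finset.mul_sum, Finset.mul_sum, ← Finset.sum_add_distrib]
    refine Finset.sum_congr rfl (fun i _ => ?_)
    simp only [hd]
    field_simp
    ring
  -- assemble
  have h2S : 2 * S < (m:ℝ) * g m (fun i => r * θ₀ i) - (m:ℝ) * g m θ₀ + (m:ℝ) * ((1-r) * T) := by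
    have hgs : (m:ℝ) * g m θs ≤ (m:ℝ) * g m (fun i => r * θ₀ i) :=
      mul_le_mul_of_nonneg_left hB hm0.le
    have hrL : 0 ≤ (m:ℝ) * (r * L) := by positivity
    have := hsc
    rw [hsum_eq, hAdec] at this
    nlinarith
  have hgoal : ((m:ℝ)/2) * (g m (fun i => r * θ₀ i) - g m θ₀ + (1-r) * T)
      = ((m:ℝ) * g m (fun i => r * θ₀ i) - (m:ℝ) * g m θ₀ + (m:ℝ) * ((1-r) * T)) / 2 := by
    ring
  rw [hgoal]
  linarith
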